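/- Let ρ_AB be a separable bipartite state on ℂ^{d_A} ⊗ ℂ^{d_B}, let {E^A_{α,k}} be an informationally complete (N_A,M_A)-POVM on ℂ^{d_A} with efficiency parameter x_A and {E^B_{β,l}} an informationally complete (N_B,M_B)-POVM on ℂ^{d_B} with efficiency parameter x_B, and let P(ρ_AB) be the (N_A M_A)×(N_B M_B) matrix with entries tr((E^A_{α,k} ⊗ E^B_{β,l}) ρ_AB). Then ‖P(ρ_AB)‖_tr ≤ √( ((d_A−1)(d_A² + M_A² x_A)/(d_A M_A (M_A−1))) · ((d_B−1)(d_B² + M_B² x_B)/(d_B M_B (M_B−1))) ). -/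

import Mathlib

open scoped BigOperators ComplexOrder
open Matrix

noncomputable def traceNorm {m n : Type*} [Fintype m] [Fintype n] [DecidableEq n]
    (X : Matrix m n ℂ) : ℝ :=
  (let hA := Matrix.posSemidef_conjTranspose_mul_self X
   hA.1.eigenvectorUnitary.1 * diagonal (fun i => ((Real.sqrt (hA.1.eigenvalues i) : ℝ) : ℂ)) *
    (star hA.1.eigenvectorUnitary : Matrix n n ℂ)).trace.re

def IsDensityMatrix {ι : Type*} [Fintype ι] (ρ : Matrix ι ι ℂ) : Prop :=
  ρ.PosSemidef ∧ ρ.trace = 1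

def IsNMPOVM (d N M : ℕ) (x : ℝ)
    (E : Fin N → Fin M → Matrix (Fin d) (Fin d) ℂ) : Prop :=
  (∀ α k, (E α k).PosSemidef) ∧
  (∀ α, ∑ k, E α k = 1) ∧
  (∀ α k, (E α k).trace = (((d : ℝ) / M : ℝ) : ℂ)) ∧
  (∀ α k, (E α k * E α k).trace = (x : ℂ)) ∧
  (∀ α k l, k ≠ l → (E α k * E α l).trace =
      ((((d : ℝ) - M * x) / (M * ((M : ℝ) - 1)) : ℝ) : ℂ)) ∧
  (∀ α β k l, α ≠ β → (E α k * E β l).trace = (((d : ℝ) / M ^ 2 : ℝ) : ℂ)) ∧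
  ((d : ℝ) / M ^ 2 < x ∧ x ≤ min ((d : ℝ) ^ 2 / M ^ 2) ((d : ℝ) / M))

def IsInfoComplete (d N M : ℕ) : Prop := ((M : ℝ) - 1) * N = (d : ℝ) ^ 2 - 1
open Kronecker

/-- Partial trace over the second factor. -/
noncomputable def ptraceB {dA dB : ℕ} (ρ : Matrix (Fin dA × Fin dB) (Fin dA × Fin dB) ℂ) :
    Matrix (Fin dA) (Fin dA) ℂ :=
  Matrix.of fun i j => ∑ k, ρ (i, k) (j, k)

/-- Partial trace over the first factor. -/
noncomputable def ptraceA {dA dB : ℕ} (ρ : Matrix (Fin dA × Fin dB) (Fin dA × Fin dB) ℂ) :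
    Matrix (Fin dB) (Fin dB) ℂ :=
  Matrix.of fun i j => ∑ k, ρ (k, i) (k, j)

/-- A bipartite state is separable if it is a finite convex combination of
tensor products of local density matrices. -/
def SeparableState {dA dB : ℕ} (ρ : Matrix (Fin dA × Fin dB) (Fin dA × Fin dB) ℂ) : Prop :=
  ∃ (K : ℕ) (p : Fin K → ℝ) (ρA : Fin K → Matrix (Fin dA) (Fin dA) ℂ)
    (ρB : Fin K → Matrix (Fin dB) (Fin dB) ℂ),
    (∀ i, 0 ≤ p i) ∧ (∑ i, p i = 1) ∧
    (∀ i, IsDensityMatrix (ρA i)) ∧ (∀ i, IsDensityMatrix (ρB i)) ∧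
    ρ = ∑ i, (p i : ℂ) • (ρA i ⊗ₖ ρB i)

noncomputable def mvec {d : Type*} [Fintype d] (X : Matrix d d ℂ) : EuclideanSpace ℂ (d × d) :=
  WithLp.toLp 2 (fun p : d × d => X p.1 p.2)

lemma inner_mvec {d : Type*} [Fintype d] (X Y : Matrix d d ℂ) :
    (inner ℂ (mvec X) (mvec Y) : ℂ) = (Xᴴ * Y).trace := by
  simp only [PiLp.inner_apply, RCLike.inner_apply, mvec, Matrix.trace, Matrix.diag,
    Matrix.mul_apply, Matrix.conjTranspose_apply]
  rw [Fintype.sum_prod_type, Finset.sum_comm]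
  exact Finset.sum_congr rfl fun _ _ => Finset.sum_congr rfl fun _ _ => mul_comm _ _


lemma frob_cs {d : Type*} [Fintype d] (X Y : Matrix d d ℂ) :
    ((Xᴴ * Y).trace.re) ^ 2 ≤ (Xᴴ * X).trace.re * (Yᴴ * Y).trace.re := by
  have h1 := norm_inner_le_norm (𝕜 := ℂ) (mvec X) (mvec Y)
  have hx : (Xᴴ * X).trace.re = ‖mvec X‖ ^ 2 := by
    rw [← inner_mvec]; exact inner_self_eq_norm_sq (𝕜 := ℂ) (mvec X)
  have hy : (Yᴴ * Y).trace.re = ‖mvec Y‖ ^ 2 := by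
    rw [← inner_mvec]; exact inner_self_eq_norm_sq (𝕜 := ℂ) (mvec Y)
  have h2 : |(Xᴴ * Y).trace.re| ≤ ‖(inner ℂ (mvec X) (mvec Y) : ℂ)‖ := by
    rw [inner_mvec]; exact Complex.abs_re_le_norm _
  calc ((Xᴴ * Y).trace.re) ^ 2 = |(Xᴴ * Y).trace.re| ^ 2 := (sq_abs _).symm
    _ ≤ (‖mvec X‖ * ‖mvec Y‖) ^ 2 := by
        apply pow_le_pow_left₀ (abs_nonneg _) (h2.trans h1)
    _ = (Xᴴ * X).trace.re * (Yᴴ * Y).trace.re := by rw [hx, hy]; ring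

lemma trace_mul_im_eq_zero {d : Type*} [Fintype d] {E σ : Matrix d d ℂ}
    (hE : E.IsHermitian) (hσ : σ.IsHermitian) : ((E * σ).trace).im = 0 := by
  rw [← Complex.conj_eq_iff_im]
  rw [show ((starRingEnd ℂ) (E * σ).trace) = star (E*σ).trace from rfl]
  rw [← Matrix.trace_conjTranspose, Matrix.conjTranspose_mul, hE.eq, hσ.eq,
    Matrix.trace_mul_comm]

lemma dens_sq_le_one {d : ℕ} {σ : Matrix (Fin d) (Fin d) ℂ}
    (hσ : σ.PosSemidef) (ht : σ.trace = 1) : ((σ * σ).trace).re ≤ 1 := by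
  have hH := hσ.1
  set U : Matrix (Fin d) (Fin d) ℂ := (hH.eigenvectorUnitary : Matrix (Fin d) (Fin d) ℂ) with hU
  have hUU : (star U) * U = 1 := Matrix.mem_unitaryGroup_iff'.mp hH.eigenvectorUnitary.2
  set D : Matrix (Fin d) (Fin d) ℂ := Matrix.diagonal (RCLike.ofReal ∘ hH.eigenvalues) with hD
  have hspec : σ = U * D * star U := hH.spectral_theorem
  have htr : (σ * σ).trace = (D * D).trace := by
    rw [hspec]
    rw [show U * D * star U * (U * D * star U) = U * (D * ((star U * U) * D)) * star U by
      simp only [Matrix.mul_assoc]]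
    rw [hUU, Matrix.one_mul, Matrix.trace_mul_cycle, ← Matrix.mul_assoc, hUU, Matrix.one_mul]
  have htr1 : σ.trace = D.trace := by
    rw [hspec, Matrix.trace_mul_cycle, hUU, Matrix.one_mul]
  have hsum1 : ∑ i, hH.eigenvalues i = 1 := by
    have : (D.trace).re = 1 := by rw [← htr1, ht]; simp
    simpa [hD, Matrix.trace_diagonal, Complex.re_sum] using this
  have hnn : ∀ i, 0 ≤ hH.eigenvalues i := hσ.eigenvalues_nonneg
  have hDD : ((D * D).trace).re = ∑ i, (hH.eigenvalues i) ^ 2 := by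
    rw [hD, Matrix.diagonal_mul_diagonal, Matrix.trace_diagonal, Complex.re_sum]
    congr 1; ext i
    simp [← Complex.ofReal_mul, sq]
  rw [htr, hDD]
  calc ∑ i, (hH.eigenvalues i) ^ 2 ≤ ∑ i, hH.eigenvalues i * 1 := by
        apply Finset.sum_le_sum
        intro i _
        rw [sq]
        apply mul_le_mul_of_nonneg_left _ (hnn i)
        rw [← hsum1]
        exact Finset.single_le_sum (fun j _ => hnn j) (Finset.mem_univ i)
    _ = 1 := by simp [hsum1]

lemma frob_self_nonneg {d : Type*} [Fintype d] (X : Matrix d d ℂ) :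
    0 ≤ (Xᴴ * X).trace.re := by
  have hx : (Xᴴ * X).trace.re = ‖mvec X‖ ^ 2 := by
    rw [← inner_mvec]; exact inner_self_eq_norm_sq (𝕜 := ℂ) (mvec X)
  rw [hx]; positivity

lemma povm_dM {d N M : ℕ} {x : ℝ} {E : Fin N → Fin M → Matrix (Fin d) (Fin d) ℂ}
    (hE : IsNMPOVM d N M x E) : 1 ≤ d ∧ 2 ≤ M := by
  obtain ⟨-, -, -, -, -, -, hx1, hx2⟩ := hE
  constructor
  · by_contra h
    push_neg at h
    interval_cases d
    · simp at hx1 hx2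
      linarith
  · by_contra h
    push_neg at h
    have hx3 := le_trans hx2 (min_le_right _ _)
    interval_cases M
    · simp at hx1 hx3
      linarith
    · simp at hx1 hx3
      linarith

lemma povm_sum_sq_le {d N M : ℕ} {x : ℝ} {E : Fin N → Fin M → Matrix (Fin d) (Fin d) ℂ}
    (hE : IsNMPOVM d N M x E) (hIC : IsInfoComplete d N M)
    {σ : Matrix (Fin d) (Fin d) ℂ} (hσ : IsDensityMatrix σ) :
    ∑ α, ∑ k, Complex.normSq ((E α k * σ).trace) ≤
      ((d:ℝ) - 1) * ((d:ℝ)^2 + (M:ℝ)^2 * x) / ((d:ℝ) * M * ((M:ℝ)-1)) := by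
  obtain ⟨hd1, hM2⟩ := povm_dM hE
  obtain ⟨hpos, hsumE, htrE, htrE2, htrEkl, htrEab, hx1, hx2⟩ := hE
  have hdR : (0:ℝ) < d := by exact_mod_cast Nat.lt_of_lt_of_le Nat.zero_lt_one hd1
  have hMR : (0:ℝ) < M := by exact_mod_cast Nat.lt_of_lt_of_le Nat.zero_lt_two hM2
  have hM1R : (0:ℝ) < (M:ℝ) - 1 := by
    have : (2:ℝ) ≤ M := by exact_mod_cast hM2
    linarith
  have hdd : (1:ℝ) ≤ d := by exact_mod_cast hd1
  have hσH : σ.IsHermitian := hσ.1.1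
  have hEH : ∀ α k, (E α k).IsHermitian := fun α k => (hpos α k).1
  -- real values
  set t : Fin N → Fin M → ℝ := fun α k => ((E α k * σ).trace).re with ht
  set s : Fin N → Fin M → ℝ := fun α k => t α k - 1 / M with hs
  have him : ∀ α k, ((E α k * σ).trace) = ((t α k : ℝ) : ℂ) := by
    intro α k
    have := trace_mul_im_eq_zero (hEH α k) hσH
    exact Complex.ext rfl (by simp [this])
  have hsumt : ∀ α, ∑ k, t α k = 1 := by
    intro α
    have h1 : ∑ k, (E α k * σ).trace = 1 := by
      rw [← Matrix.trace_sum, ← Matrix.sum_mul, hsumE α, Matrix.one_mul, hσ.2]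
    have := congrArg Complex.re h1
    simpa [ht, Complex.re_sum] using this
  have hsums : ∀ α, ∑ k, s α k = 0 := by
    intro α
    simp only [hs, Finset.sum_sub_distrib, hsumt α, Finset.sum_const, Finset.card_univ,
      Fintype.card_fin, nsmul_eq_mul]
    field_simp
    norm_num
  -- shifted matrices
  set σ₀ : Matrix (Fin d) (Fin d) ℂ := σ - ((1 / d : ℝ) : ℂ) • 1 with hσ₀
  set G : Fin N → Fin M → Matrix (Fin d) (Fin d) ℂ :=
    fun α k => E α k - ((1 / M : ℝ) : ℂ) • 1 with hG
  have hGH : ∀ α k, (G α k)ᴴ = G α k := by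
    intro α k
    simp [hG, Matrix.conjTranspose_sub, (hEH α k).eq, Matrix.conjTranspose_smul,
      Complex.conj_ofReal]
  have hσ₀H : σ₀ᴴ = σ₀ := by
    simp [hσ₀, Matrix.conjTranspose_sub, hσH.eq, Matrix.conjTranspose_smul, Complex.conj_ofReal]
  have htr1 : (1 : Matrix (Fin d) (Fin d) ℂ).trace = (d : ℂ) := by
    simp [Matrix.trace_one]
  -- ⟨G, σ₀⟩ = s
  have hGs : ∀ α k, ((G α k * σ₀).trace).re = s α k := by
    intro α k
    have : (G α k * σ₀) = E α k * σ - ((1/d:ℝ):ℂ) • E α k - ((1/M:ℝ):ℂ) • σ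
        + (((1/M:ℝ):ℂ) * ((1/d:ℝ):ℂ)) • 1 := by
      simp only [hG, hσ₀, Matrix.sub_mul, Matrix.mul_sub, Matrix.smul_mul, Matrix.mul_smul,
        Matrix.mul_one, Matrix.one_mul, smul_smul]
      module
    rw [this]
    simp only [Matrix.trace_sub, Matrix.trace_add, Matrix.trace_smul, htrE α k, hσ.2, htr1,
      him α k]
    simp only [smul_eq_mul, ← Complex.ofReal_mul]
    push_cast
    simp only [Complex.sub_re, Complex.add_re, Complex.mul_re, Complex.ofReal_re,
      Complex.ofReal_im, Complex.one_re, Complex.one_im, Complex.natCast_re, Complex.natCast_im]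
    simp only [← Complex.ofReal_natCast, ← Complex.ofReal_div, ← Complex.ofReal_one,
      Complex.ofReal_re, Complex.ofReal_im]
    ring_nf
    field_simp [hs]
    simp only [hs]
    field_simp
  -- Gram values
  set c : ℝ := x - d / M^2 with hc
  have hcpos : 0 < c := by simp only [hc]; linarith
  set lam : ℝ := c * M / (M - 1) with hlam
  have hlampos : 0 < lam := by positivity
  have hGG : ∀ α β k l, ((G α k * G β l).trace).re =
      if α = β then (if k = l then c else -c/(M-1)) else 0 := by
    intro α β k l
    have hexp : (G α k * G β l) = E α k * E β l - ((1/M:ℝ):ℂ) • E α k - ((1/M:ℝ):ℂ) • E β l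
        + (((1/M:ℝ):ℂ) * ((1/M:ℝ):ℂ)) • 1 := by
      simp only [hG, Matrix.sub_mul, Matrix.mul_sub, Matrix.smul_mul, Matrix.mul_smul,
        Matrix.mul_one, Matrix.one_mul, smul_smul]
      module
    have htrG : ((G α k * G β l).trace) = (E α k * E β l).trace - ((d/M^2 : ℝ):ℂ) := by
      rw [hexp]
      simp only [Matrix.trace_sub, Matrix.trace_add, Matrix.trace_smul, htrE, htr1, smul_eq_mul]
      have hMC : ((M:ℕ):ℂ) ≠ 0 := Nat.cast_ne_zero.mpr (by omega)
      push_cast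
      field_simp
      ring
    by_cases hab : α = β
    · subst hab
      by_cases hkl : k = l
      · subst hkl
        simp only [eq_self_iff_true, if_true]
        rw [htrG, htrE2, ← Complex.ofReal_sub, Complex.ofReal_re, hc]
      · simp only [eq_self_iff_true, if_true, if_neg hkl]
        rw [htrG, htrEkl α k l hkl, ← Complex.ofReal_sub, Complex.ofReal_re, hc]
        field_simp
        ring
    · simp only [if_neg hab]
      rw [htrG, htrEab α β k l hab, ← Complex.ofReal_sub, Complex.ofReal_re]
      simp
  -- the W matrix
  set W : Matrix (Fin d) (Fin d) ℂ := ∑ α, ∑ k, ((s α k : ℝ) : ℂ) • G α k with hW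
  set S : ℝ := ∑ α, ∑ k, (s α k)^2 with hS
  have hSnn : 0 ≤ S := by positivity
  have hWH : Wᴴ = W := by
    simp only [hW, Matrix.conjTranspose_sum, Matrix.conjTranspose_smul, RCLike.star_def,
      Complex.conj_ofReal]
    simp only [hGH]
  have step1 : ∀ (Y : Matrix (Fin d) (Fin d) ℂ),
      (W * Y).trace = ∑ α, ∑ k, ((s α k : ℝ):ℂ) * (G α k * Y).trace := by
    intro Y
    rw [hW]
    simp only [Matrix.sum_mul, Matrix.smul_mul, Matrix.trace_sum, Matrix.trace_smul, smul_eq_mul]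
  have step2 : ∀ (Z : Matrix (Fin d) (Fin d) ℂ),
      (Z * W).trace = ∑ β, ∑ l, ((s β l : ℝ):ℂ) * (Z * G β l).trace := by
    intro Z
    rw [hW]
    simp only [Matrix.mul_sum, Matrix.mul_smul, Matrix.trace_sum, Matrix.trace_smul, smul_eq_mul]
  have h1 : ((Wᴴ * σ₀).trace).re = S := by
    rw [hWH, step1 σ₀]
    simp only [Complex.re_sum, Complex.mul_re, Complex.ofReal_re, Complex.ofReal_im, zero_mul,
      sub_zero]
    rw [hS]
    apply Finset.sum_congr rfl; intro α _
    apply Finset.sum_congr rfl; intro k _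
    rw [hGs α k]; ring
  have hinner : ∀ α k, ∑ β, ∑ l, s β l * ((G α k * G β l).trace).re = lam * s α k := by
    intro α k
    rw [Finset.sum_eq_single α]
    · have key : ∀ l, s α l * ((G α k * G α l).trace).re
          = (-c/(M-1)) * s α l + (c + c/(M-1)) * (if k = l then s α l else 0) := by
        intro l
        rw [hGG]
        simp only [eq_self_iff_true, if_true]
        by_cases hkl : k = l
        · subst hkl; simp only [eq_self_iff_true, if_true]; ring
        · simp only [if_neg hkl]; ring
      simp only [key]
      rw [Finset.sum_add_distrib, ← Finset.mul_sum, hsums α, mul_zero, zero_add, ← Finset.mul_sum,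
        Finset.sum_ite_eq]
      simp only [Finset.mem_univ, if_true]
      rw [hlam]
      have hcc : c + c / ((M:ℝ)-1) = c * M / ((M:ℝ)-1) := by field_simp; ring
      rw [← hcc]
    · intro β _ hβ
      apply Finset.sum_eq_zero; intro l _
      rw [hGG]
      simp [Ne.symm hβ]
    · intro h; exact absurd (Finset.mem_univ α) h
  have h2 : ((Wᴴ * W).trace).re = lam * S := by
    rw [hWH]
    have e : (W * W).trace
        = ∑ α, ∑ k, ((s α k:ℝ):ℂ) * ∑ β, ∑ l, ((s β l:ℝ):ℂ) * (G α k * G β l).trace := by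
      rw [step1 W]
      apply Finset.sum_congr rfl; intro α _
      apply Finset.sum_congr rfl; intro k _
      rw [step2 (G α k)]
    rw [e]
    simp only [Complex.re_sum, Complex.mul_re, Complex.ofReal_re, Complex.ofReal_im, zero_mul,
      sub_zero]
    simp only [hinner]
    rw [hS, Finset.mul_sum]
    apply Finset.sum_congr rfl; intro α _
    rw [Finset.mul_sum]
    apply Finset.sum_congr rfl; intro k _
    ring
  have h3 : ((σ₀ᴴ * σ₀).trace).re = ((σ * σ).trace).re - 1/d := by
    rw [hσ₀H]
    have hexp : σ₀ * σ₀ = σ * σ - ((1/d:ℝ):ℂ) • σ - ((1/d:ℝ):ℂ) • σ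
        + (((1/d:ℝ):ℂ) * ((1/d:ℝ):ℂ)) • 1 := by
      simp only [hσ₀, Matrix.sub_mul, Matrix.mul_sub, Matrix.smul_mul, Matrix.mul_smul,
        Matrix.mul_one, Matrix.one_mul, smul_smul]
      module
    rw [hexp]
    simp only [Matrix.trace_sub, Matrix.trace_add, Matrix.trace_smul, hσ.2, htr1, smul_eq_mul,
      mul_one]
    simp only [Complex.sub_re, Complex.add_re, Complex.mul_re, Complex.ofReal_re,
      Complex.ofReal_im, Complex.one_re, Complex.one_im, Complex.natCast_re, Complex.natCast_im,
      zero_mul, sub_zero, mul_zero]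
    field_simp
    ring
  have hCS := frob_cs W σ₀
  rw [h1, h2, h3] at hCS
  have hub : ((σ * σ).trace).re - 1/d ≤ 1 - 1/d := by
    have := dens_sq_le_one hσ.1 hσ.2
    linarith
  have h1d : 0 ≤ 1 - 1/(d:ℝ) := by
    rw [sub_nonneg, div_le_one hdR]
    exact hdd
  have hSle : S ≤ lam * (1 - 1/d) := by
    rcases eq_or_lt_of_le hSnn with h | h
    · rw [← h]
      exact mul_nonneg hlampos.le h1d
    · have h' : S * S ≤ (lam * (((σ * σ).trace).re - 1/d)) * S := by
        calc S * S = S^2 := (sq S).symm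
          _ ≤ lam * S * (((σ * σ).trace).re - 1/d) := hCS
          _ = (lam * (((σ * σ).trace).re - 1/d)) * S := by ring
      have hS1 : S ≤ lam * (((σ * σ).trace).re - 1/d) := le_of_mul_le_mul_right h' h
      exact hS1.trans (mul_le_mul_of_nonneg_left hub hlampos.le)
  have colsum : ∀ α, ∑ k, (t α k)^2 = (∑ k, (s α k)^2) + 1/M := by
    intro α
    calc ∑ k, (t α k)^2 = ∑ k, ((s α k)^2 + (2/M) * s α k + 1/M^2) :=
          Finset.sum_congr rfl (fun k _ => by simp only [hs]; ring)
      _ = (∑ k, (s α k)^2) + (2/M) * (∑ k, s α k) + (M:ℝ) * (1/M^2) := by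
          rw [Finset.sum_add_distrib, Finset.sum_add_distrib, ← Finset.mul_sum]
          simp [Finset.sum_const, Finset.card_univ, nsmul_eq_mul]
      _ = (∑ k, (s α k)^2) + 1/M := by
          rw [hsums α]
          field_simp
          ring
  have htot : ∑ α, ∑ k, Complex.normSq ((E α k * σ).trace) = (N:ℝ)/M + S := by
    have hns : ∀ α k, Complex.normSq ((E α k * σ).trace) = (t α k)^2 := by
      intro α k
      rw [him α k, Complex.normSq_ofReal, sq]
    calc ∑ α, ∑ k, Complex.normSq ((E α k * σ).trace) = ∑ α, ∑ k, (t α k)^2 := by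
          simp only [hns]
      _ = ∑ α : Fin N, ((∑ k, (s α k)^2) + 1/M) := by
          apply Finset.sum_congr rfl; intro α _; exact colsum α
      _ = (N:ℝ)/M + S := by
          rw [Finset.sum_add_distrib, hS]
          simp [Finset.sum_const, Finset.card_univ, nsmul_eq_mul]
          ring
  rw [htot]
  have hN : (N:ℝ) = ((d:ℝ)^2 - 1)/((M:ℝ) - 1) := by
    have hIC2 : ((M:ℝ) - 1) * N = (d:ℝ)^2 - 1 := hIC
    field_simp
    linarith
  calc (N:ℝ)/M + S ≤ (N:ℝ)/M + lam * (1 - 1/d) := by linarith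
    _ = ((d:ℝ) - 1) * ((d:ℝ)^2 + (M:ℝ)^2 * x) / ((d:ℝ) * M * ((M:ℝ)-1)) := by
        rw [hN, hlam, hc]
        field_simp
        ring

lemma traceNorm_mul_le {m p n : Type*} [Fintype m] [Fintype p] [Fintype n] [DecidableEq n]
    (A : Matrix m p ℂ) (B : Matrix p n ℂ) :
    traceNorm (A * B) ≤ Real.sqrt ((Aᴴ * A).trace.re) * Real.sqrt ((Bᴴ * B).trace.re) := by
  classical
  set X : Matrix m n ℂ := A * B with hX
  set hH : (Xᴴ * X).PosSemidef := Matrix.posSemidef_conjTranspose_mul_self X with hhH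
  set μ : n → ℝ := hH.1.eigenvalues with hμ
  have hμnn : ∀ j, 0 ≤ μ j := fun j => hH.eigenvalues_nonneg j
  set v : n → EuclideanSpace ℂ n := fun j => hH.1.eigenvectorBasis j with hv
  -- Step A : traceNorm X = ∑ j, √ (μ j)
  have stepA : traceNorm X = ∑ j, Real.sqrt (μ j) := by
    have hsq : traceNorm X = ((hH.1.eigenvectorUnitary : Matrix n n ℂ) *
        Matrix.diagonal (fun i => ((Real.sqrt (hH.1.eigenvalues i) : ℝ) : ℂ)) *
        (star hH.1.eigenvectorUnitary : Matrix n n ℂ)).trace.re := rfl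
    have hUU : (star (hH.1.eigenvectorUnitary : Matrix n n ℂ)) *
        (hH.1.eigenvectorUnitary : Matrix n n ℂ) = 1 :=
      Matrix.mem_unitaryGroup_iff'.mp hH.1.eigenvectorUnitary.2
    rw [hsq, Matrix.trace_mul_cycle, hUU, Matrix.one_mul, Matrix.trace_diagonal]
    rw [Complex.re_sum]
    rfl
  -- vectors
  set y : n → EuclideanSpace ℂ m := fun j => (WithLp.equiv 2 (m → ℂ)).symm (X *ᵥ ⇑(v j)) with hy
  have hyy : ∀ j k, (inner ℂ (y j) (y k) : ℂ) = if j = k then (μ k : ℂ) else 0 := by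
    intro j k
    have h1 : (inner ℂ (y j) (y k) : ℂ) = dotProduct (star (X *ᵥ ⇑(v j))) (X *ᵥ ⇑(v k)) :=
      by rw [dotProduct_comm]; rfl
    rw [h1, Matrix.star_mulVec, ← dotProduct_mulVec, Matrix.mulVec_mulVec]
    have h2 : (Xᴴ * X) *ᵥ ⇑(v k) = μ k • ⇑(v k) := hH.1.mulVec_eigenvectorBasis k
    rw [h2, dotProduct_smul]
    have h3 : dotProduct (star ⇑(v j)) ⇑(v k) = (inner ℂ (v j) (v k) : ℂ) := by rw [dotProduct_comm]; rfl
    rw [h3]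
    have h4 : (inner ℂ (v j) (v k) : ℂ) = if j = k then 1 else 0 :=
      orthonormal_iff_ite.mp (hH.1.eigenvectorBasis.orthonormal) j k
    rw [h4]
    by_cases hjk : j = k
    · simp [hjk, Complex.real_smul]
    · simp [hjk]
  have hynorm : ∀ j, ‖y j‖ ^ 2 = μ j := by
    intro j
    have := hyy j j
    simp only [if_pos rfl] at this
    have h5 := inner_self_eq_norm_sq (𝕜 := ℂ) (y j)
    rw [this] at h5
    simpa [RCLike.re_to_complex] using h5.symm
  have hyz : ∀ j, μ j = 0 → y j = 0 := by
    intro j h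
    have h0 : (inner ℂ (y j) (y j) : ℂ) = 0 := by
      rw [hyy j j]; simp [h]
    exact inner_self_eq_zero.mp h0
  -- normalized vectors
  set w : n → EuclideanSpace ℂ m := fun j => (((Real.sqrt (μ j) : ℝ) : ℂ))⁻¹ • y j with hw
  have hwz : ∀ j, μ j = 0 → w j = 0 := by
    intro j h
    simp [hw, hyz j h]
  have horth : Orthonormal ℂ (fun j : {j : n // μ j ≠ 0} => w (j : n)) := by
    rw [orthonormal_iff_ite]
    intro j k
    simp only [hw, inner_smul_left, inner_smul_right]
    rw [hyy]
    by_cases hjk : (j : n) = (k : n)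
    · have hjk' : j = k := Subtype.ext hjk
      subst hjk'
      simp only [if_pos rfl, hjk, eq_self_iff_true, if_true]
      rw [map_inv₀, Complex.conj_ofReal]
      have hμpos : 0 < μ (j : n) := lt_of_le_of_ne (hμnn _) (Ne.symm j.2)
      have : ((Real.sqrt (μ (j:n)) : ℝ) : ℂ) * ((Real.sqrt (μ (j:n)) : ℝ) : ℂ) = ((μ (j:n) : ℝ) : ℂ) := by
        rw [← Complex.ofReal_mul, Real.mul_self_sqrt (hμnn _)]
      field_simp
      rw [← Complex.ofReal_pow, Real.sq_sqrt (hμnn _)]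
    · have hjk' : ¬ (j = k) := fun h => hjk (congrArg _ h)
      simp [hjk, hjk']
  -- the z and u vectors
  set z : n → EuclideanSpace ℂ p := fun j => (WithLp.equiv 2 (p → ℂ)).symm (Aᴴ *ᵥ ⇑(w j)) with hz
  set u : n → EuclideanSpace ℂ p := fun j => (WithLp.equiv 2 (p → ℂ)).symm (B *ᵥ ⇑(v j)) with hu
  have hadj : ∀ j, (inner ℂ (z j) (u j) : ℂ) = (inner ℂ (w j) (y j) : ℂ) := by
    intro j
    have h1 : (inner ℂ (z j) (u j) : ℂ) = dotProduct (star (Aᴴ *ᵥ ⇑(w j))) (B *ᵥ ⇑(v j)) :=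
      by rw [dotProduct_comm]; rfl
    have h2 : (inner ℂ (w j) (y j) : ℂ) = dotProduct (star ⇑(w j)) (X *ᵥ ⇑(v j)) := by rw [dotProduct_comm]; rfl
    rw [h1, h2, Matrix.star_mulVec, Matrix.conjTranspose_conjTranspose, hX,
      ← Matrix.mulVec_mulVec, dotProduct_mulVec, dotProduct_mulVec,
      dotProduct_mulVec]
  have hkey : ∀ j, Real.sqrt (μ j) = ((inner ℂ (z j) (u j) : ℂ)).re := by
    intro j
    rw [hadj j]
    by_cases h : μ j = 0
    · rw [hwz j h, h]
      simp
    · have hμpos : 0 < μ j := lt_of_le_of_ne (hμnn _) (Ne.symm h)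
      rw [hw]
      simp only [inner_smul_left, map_inv₀, Complex.conj_ofReal]
      rw [hyy]
      simp only [if_pos rfl, if_true]
      rw [show ((((Real.sqrt (μ j)) : ℝ):ℂ))⁻¹ * (((μ j) : ℝ):ℂ)
          = ((((Real.sqrt (μ j))⁻¹ * (μ j)) : ℝ) : ℂ) by push_cast; ring]
      rw [Complex.ofReal_re, eq_comm, inv_mul_eq_iff_eq_mul₀ (by positivity)]
      exact (Real.mul_self_sqrt (hμnn j)).symm
  -- Bessel bounds
  have hubd : ∑ j, ‖u j‖ ^ 2 ≤ (Bᴴ * B).trace.re := by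
    have hrow : ∀ i j, (u j) i = (inner ℂ ((WithLp.equiv 2 (n → ℂ)).symm
        (fun a => star (B i a))) (v j) : ℂ) := by
      intro i j
      have : (inner ℂ ((WithLp.equiv 2 (n → ℂ)).symm (fun a => star (B i a))) (v j) : ℂ)
          = dotProduct (star (fun a => star (B i a))) ⇑(v j) := by rw [dotProduct_comm]; rfl
      rw [this]
      simp [dotProduct, Matrix.mulVec, hu]
    have hnorm2 : ∀ j, ‖u j‖ ^ 2 = ∑ i, ‖(u j) i‖ ^ 2 := by
      intro j
      rw [EuclideanSpace.norm_eq, Real.sq_sqrt]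
      positivity
    calc ∑ j, ‖u j‖ ^ 2 = ∑ j, ∑ i, ‖(u j) i‖ ^ 2 := by
          exact Finset.sum_congr rfl fun j _ => hnorm2 j
      _ = ∑ i, ∑ j, ‖(u j) i‖ ^ 2 := Finset.sum_comm
      _ ≤ ∑ i : p, ‖(WithLp.equiv 2 (n → ℂ)).symm (fun a => star (B i a))‖ ^ 2 := by
          apply Finset.sum_le_sum
          intro i _
          have hb := (hH.1.eigenvectorBasis.orthonormal).sum_inner_products_le
            (s := Finset.univ) ((WithLp.equiv 2 (n → ℂ)).symm (fun a => star (B i a)))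
          calc ∑ j, ‖(u j) i‖ ^ 2
              = ∑ j, ‖(inner ℂ (hH.1.eigenvectorBasis j) ((WithLp.equiv 2 (n → ℂ)).symm
                  (fun a => star (B i a))) : ℂ)‖ ^ 2 := by
                apply Finset.sum_congr rfl
                intro j _
                rw [hrow i j, norm_inner_symm]
            _ ≤ _ := hb
      _ = (Bᴴ * B).trace.re := by
          simp only [Matrix.trace, Matrix.diag, Matrix.mul_apply, Matrix.conjTranspose_apply,
            Complex.re_sum]
          rw [Finset.sum_comm]
          apply Finset.sum_congr rfl
          intro i _
          rw [EuclideanSpace.norm_eq, Real.sq_sqrt (by positivity)]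
          apply Finset.sum_congr rfl
          intro a _
          simp only [WithLp.equiv_symm_apply, PiLp.toLp_apply]
          rw [norm_star, Complex.mul_re]
          simp only [Complex.star_def, Complex.conj_re, Complex.conj_im]
          rw [Complex.sq_norm, Complex.normSq_apply]
          ring
  have hzbd : ∑ j, ‖z j‖ ^ 2 ≤ (Aᴴ * A).trace.re := by
    have hcol : ∀ i j, (z j) i = (inner ℂ ((WithLp.equiv 2 (m → ℂ)).symm
        (fun a => A a i)) (w j) : ℂ) := by
      intro i j
      have : (inner ℂ ((WithLp.equiv 2 (m → ℂ)).symm (fun a => A a i)) (w j) : ℂ)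
          = dotProduct (star (fun a => A a i)) ⇑(w j) := by rw [dotProduct_comm]; rfl
      rw [this]
      simp [dotProduct, Matrix.mulVec, hz, Matrix.conjTranspose_apply]
    have hnorm2 : ∀ j, ‖z j‖ ^ 2 = ∑ i, ‖(z j) i‖ ^ 2 := by
      intro j
      rw [EuclideanSpace.norm_eq, Real.sq_sqrt]
      positivity
    have hzvanish : ∀ j, μ j = 0 → ‖z j‖ ^ 2 = 0 := by
      intro j h
      have hz0 : z j = 0 := by
        rw [hz]
        simp only [hwz j h]
        have h00 : ⇑(0 : EuclideanSpace ℂ m) = (0 : m → ℂ) := rfl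
        rw [h00, Matrix.mulVec_zero]
        rfl
      rw [hz0]
      simp
    calc ∑ j, ‖z j‖ ^ 2 = ∑ j ∈ Finset.univ.filter (fun j => μ j ≠ 0), ‖z j‖ ^ 2 := by
          rw [Finset.sum_filter_of_ne]
          intro j _ hne
          rcases eq_or_ne (μ j) 0 with h | h
          · exact absurd (hzvanish j h) hne
          · exact h
      _ = ∑ j : {j : n // μ j ≠ 0}, ‖z (j : n)‖ ^ 2 := by
          rw [← Finset.sum_subtype (Finset.univ.filter (fun j => μ j ≠ 0))
            (fun j => by simp) (fun j => ‖z j‖ ^ 2)]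
      _ = ∑ i : p, ∑ j : {j : n // μ j ≠ 0}, ‖(z (j : n)) i‖ ^ 2 := by
          rw [← Finset.sum_comm]
          apply Finset.sum_congr rfl
          intro j _
          exact hnorm2 _
      _ ≤ ∑ i : p, ‖(WithLp.equiv 2 (m → ℂ)).symm (fun a => A a i)‖ ^ 2 := by
          apply Finset.sum_le_sum
          intro i _
          have hb := horth.sum_inner_products_le (s := Finset.univ)
            ((WithLp.equiv 2 (m → ℂ)).symm (fun a => A a i))
          calc ∑ j : {j : n // μ j ≠ 0}, ‖(z (j : n)) i‖ ^ 2
              = ∑ j : {j : n // μ j ≠ 0}, ‖(inner ℂ (w (j : n)) ((WithLp.equiv 2 (m → ℂ)).symm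
                  (fun a => A a i)) : ℂ)‖ ^ 2 := by
                apply Finset.sum_congr rfl
                intro j _
                rw [hcol i (j : n), norm_inner_symm]
            _ ≤ _ := hb
      _ = (Aᴴ * A).trace.re := by
          simp only [Matrix.trace, Matrix.diag, Matrix.mul_apply, Matrix.conjTranspose_apply,
            Complex.re_sum]
          apply Finset.sum_congr rfl
          intro i _
          rw [EuclideanSpace.norm_eq, Real.sq_sqrt (by positivity)]
          apply Finset.sum_congr rfl
          intro a _
          simp only [WithLp.equiv_symm_apply, PiLp.toLp_apply]
          rw [Complex.mul_re]
          simp only [Complex.star_def, Complex.conj_re, Complex.conj_im]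
          rw [Complex.sq_norm, Complex.normSq_apply]
          ring
  -- put it together
  have hzs : 0 ≤ ∑ j, ‖z j‖ ^ 2 := by positivity
  have hus : 0 ≤ ∑ j, ‖u j‖ ^ 2 := by positivity
  calc traceNorm X = ∑ j, Real.sqrt (μ j) := stepA
    _ ≤ ∑ j, ‖z j‖ * ‖u j‖ := by
        apply Finset.sum_le_sum
        intro j _
        rw [hkey j]
        exact re_inner_le_norm (𝕜 := ℂ) (z j) (u j)
    _ ≤ Real.sqrt (∑ j, ‖z j‖ ^ 2) * Real.sqrt (∑ j, ‖u j‖ ^ 2) := by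
        have hcs := Finset.sum_mul_sq_le_sq_mul_sq Finset.univ (fun j => ‖z j‖) (fun j => ‖u j‖)
        have hnn : 0 ≤ ∑ j, ‖z j‖ * ‖u j‖ :=
          Finset.sum_nonneg fun j _ => mul_nonneg (norm_nonneg _) (norm_nonneg _)
        rw [← Real.sqrt_mul hzs]
        rw [show ∑ j, ‖z j‖ * ‖u j‖ = Real.sqrt ((∑ j, ‖z j‖ * ‖u j‖) ^ 2) from
          (Real.sqrt_sq hnn).symm]
        exact Real.sqrt_le_sqrt hcs
    _ ≤ Real.sqrt ((Aᴴ * A).trace.re) * Real.sqrt ((Bᴴ * B).trace.re) := by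
        apply mul_le_mul (Real.sqrt_le_sqrt hzbd) (Real.sqrt_le_sqrt hubd)
          (Real.sqrt_nonneg _) (Real.sqrt_nonneg _)

/-- for a separable bipartite state ρ_AB and informationally
complete (N_A,M_A)- and (N_B,M_B)-POVMs on the two subsystems, the matrix
P(ρ_AB) with entries tr((E^A_{α,k} ⊗ E^B_{β,l}) ρ_AB) satisfies
‖P(ρ_AB)‖_tr ≤ √(((d_A−1)(d_A²+M_A²x_A)/(d_A M_A(M_A−1)))·((d_B−1)(d_B²+M_B²x_B)/(d_B M_B(M_B−1)))). -/
theorem separability_criterion_correlation_matrix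
    (dA dB NA MA NB MB : ℕ) (xA xB : ℝ)
    (EA : Fin NA → Fin MA → Matrix (Fin dA) (Fin dA) ℂ)
    (EB : Fin NB → Fin MB → Matrix (Fin dB) (Fin dB) ℂ)
    (hEA : IsNMPOVM dA NA MA xA EA) (hICA : IsInfoComplete dA NA MA)
    (hEB : IsNMPOVM dB NB MB xB EB) (hICB : IsInfoComplete dB NB MB)
    (ρ : Matrix (Fin dA × Fin dB) (Fin dA × Fin dB) ℂ)
    (hρ : IsDensityMatrix ρ) (hsep : SeparableState ρ) :
    traceNorm (Matrix.of fun (p : Fin NA × Fin MA) (q : Fin NB × Fin MB) =>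
        ((EA p.1 p.2 ⊗ₖ EB q.1 q.2) * ρ).trace) ≤
    Real.sqrt (
      (((dA : ℝ) - 1) * ((dA : ℝ) ^ 2 + (MA : ℝ) ^ 2 * xA) /
          ((dA : ℝ) * MA * ((MA : ℝ) - 1))) *
      (((dB : ℝ) - 1) * ((dB : ℝ) ^ 2 + (MB : ℝ) ^ 2 * xB) /
          ((dB : ℝ) * MB * ((MB : ℝ) - 1)))) := by
  classical
  obtain ⟨K, p, ρA, ρB, hp, hp1, hρA, hρB, hρeq⟩ := hsep
  set CA : ℝ := ((dA:ℝ) - 1) * ((dA:ℝ)^2 + (MA:ℝ)^2 * xA) / ((dA:ℝ) * MA * ((MA:ℝ)-1))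
    with hCA
  set CB : ℝ := ((dB:ℝ) - 1) * ((dB:ℝ)^2 + (MB:ℝ)^2 * xB) / ((dB:ℝ) * MB * ((MB:ℝ)-1))
    with hCB
  have hCAnn : 0 ≤ CA := by
    obtain ⟨h1, h2⟩ := povm_dM hEA
    have h1' : (1:ℝ) ≤ dA := by exact_mod_cast h1
    have h2' : (2:ℝ) ≤ MA := by exact_mod_cast h2
    have hx : 0 ≤ xA := le_of_lt (lt_of_le_of_lt (by positivity) hEA.2.2.2.2.2.2.1)
    apply div_nonneg
    · apply mul_nonneg (by linarith)
      positivity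
    · apply mul_nonneg (mul_nonneg (by linarith) (by linarith))
      linarith
  have hCBnn : 0 ≤ CB := by
    obtain ⟨h1, h2⟩ := povm_dM hEB
    have h1' : (1:ℝ) ≤ dB := by exact_mod_cast h1
    have h2' : (2:ℝ) ≤ MB := by exact_mod_cast h2
    have hx : 0 ≤ xB := le_of_lt (lt_of_le_of_lt (by positivity) hEB.2.2.2.2.2.2.1)
    apply div_nonneg
    · apply mul_nonneg (by linarith)
      positivity
    · apply mul_nonneg (mul_nonneg (by linarith) (by linarith))
      linarith
  set AM : Matrix (Fin NA × Fin MA) (Fin K) ℂ :=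
    Matrix.of fun q i => ((Real.sqrt (p i) : ℝ) : ℂ) * ((EA q.1 q.2 * ρA i).trace) with hAM
  set BM : Matrix (Fin K) (Fin NB × Fin MB) ℂ :=
    Matrix.of fun i q => ((Real.sqrt (p i) : ℝ) : ℂ) * ((EB q.1 q.2 * ρB i).trace) with hBM
  have star_mul_self_re : ∀ z : ℂ, (star z * z).re = Complex.normSq z := by
    intro z
    simp only [Complex.star_def, Complex.mul_re, Complex.conj_re, Complex.conj_im,
      Complex.normSq_apply]
    ring
  have hfact : (Matrix.of fun (q : Fin NA × Fin MA) (r : Fin NB × Fin MB) =>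
      ((EA q.1 q.2 ⊗ₖ EB r.1 r.2) * ρ).trace) = AM * BM := by
    ext q r
    simp only [Matrix.of_apply, Matrix.mul_apply, hAM, hBM]
    rw [hρeq, Matrix.mul_sum, Matrix.trace_sum]
    apply Finset.sum_congr rfl
    intro i _
    rw [Matrix.mul_smul, Matrix.trace_smul, ← Matrix.mul_kronecker_mul, Matrix.trace_kronecker]
    have hsq : ((p i : ℝ) : ℂ) = ((Real.sqrt (p i) : ℝ) : ℂ) * ((Real.sqrt (p i) : ℝ) : ℂ) := by
      rw [← Complex.ofReal_mul, Real.mul_self_sqrt (hp i)]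
    rw [smul_eq_mul, hsq]
    ring
  have hboundA : (AMᴴ * AM).trace.re ≤ CA := by
    have htr : (AMᴴ * AM).trace.re
        = ∑ i, (p i) * (∑ α, ∑ k, Complex.normSq ((EA α k * ρA i).trace)) := by
      simp only [Matrix.trace, Matrix.diag, Matrix.mul_apply, Matrix.conjTranspose_apply,
        Complex.re_sum]
      apply Finset.sum_congr rfl
      intro i _
      calc ∑ q : Fin NA × Fin MA, (star (AM q i) * AM q i).re
          = ∑ q : Fin NA × Fin MA, p i * Complex.normSq ((EA q.1 q.2 * ρA i).trace) := by
            apply Finset.sum_congr rfl; intro q _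
            rw [star_mul_self_re]
            simp only [hAM, Matrix.of_apply]
            rw [Complex.normSq_mul, Complex.normSq_ofReal, Real.mul_self_sqrt (hp i)]
        _ = p i * (∑ α, ∑ k, Complex.normSq ((EA α k * ρA i).trace)) := by
            rw [← Finset.mul_sum, Fintype.sum_prod_type]
    rw [htr]
    calc ∑ i, (p i) * (∑ α, ∑ k, Complex.normSq ((EA α k * ρA i).trace))
        ≤ ∑ i, (p i) * CA := Finset.sum_le_sum fun i _ =>
          mul_le_mul_of_nonneg_left (povm_sum_sq_le hEA hICA (hρA i)) (hp i)
      _ = CA := by rw [← Finset.sum_mul, hp1, one_mul]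
  have hboundB : (BMᴴ * BM).trace.re ≤ CB := by
    have htr : (BMᴴ * BM).trace.re
        = ∑ i, (p i) * (∑ β, ∑ l, Complex.normSq ((EB β l * ρB i).trace)) := by
      simp only [Matrix.trace, Matrix.diag, Matrix.mul_apply, Matrix.conjTranspose_apply,
        Complex.re_sum]
      rw [Finset.sum_comm]
      apply Finset.sum_congr rfl
      intro i _
      calc ∑ q : Fin NB × Fin MB, (star (BM i q) * BM i q).re
          = ∑ q : Fin NB × Fin MB, p i * Complex.normSq ((EB q.1 q.2 * ρB i).trace) := by
            apply Finset.sum_congr rfl; intro q _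
            rw [star_mul_self_re]
            simp only [hBM, Matrix.of_apply]
            rw [Complex.normSq_mul, Complex.normSq_ofReal, Real.mul_self_sqrt (hp i)]
        _ = p i * (∑ β, ∑ l, Complex.normSq ((EB β l * ρB i).trace)) := by
            rw [← Finset.mul_sum, Fintype.sum_prod_type]
    rw [htr]
    calc ∑ i, (p i) * (∑ β, ∑ l, Complex.normSq ((EB β l * ρB i).trace))
        ≤ ∑ i, (p i) * CB := Finset.sum_le_sum fun i _ =>
          mul_le_mul_of_nonneg_left (povm_sum_sq_le hEB hICB (hρB i)) (hp i)
      _ = CB := by rw [← Finset.sum_mul, hp1, one_mul]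
  rw [hfact]
  calc traceNorm (AM * BM)
      ≤ Real.sqrt ((AMᴴ * AM).trace.re) * Real.sqrt ((BMᴴ * BM).trace.re) :=
        traceNorm_mul_le AM BM
    _ ≤ Real.sqrt CA * Real.sqrt CB :=
        mul_le_mul (Real.sqrt_le_sqrt hboundA) (Real.sqrt_le_sqrt hboundB)
          (Real.sqrt_nonneg _) (Real.sqrt_nonneg _)
    _ = Real.sqrt (CA * CB) := (Real.sqrt_mul hCAnn _).symm
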